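/- Let (Λ, d) be a source-free k-graph, v ∈ Λ⁰, and ℰ₁ ∪ ℰ₂ a partition of r⁻¹(v) ∩ Λ¹ satisfying the pairing condition. Let G_I be the in-split colored graph (v replaced by v¹, v²; each edge f with source v replaced by f¹, f² with sources v¹, v² respectively; each edge f with range v and f ∈ ℰ_i gets range v^i), with equivalence relation λ ∼_I μ iff par(λ) ∼ par(μ), r_I(λ) = r_I(μ), and s_I(λ) = s_I(μ), where par deletes superscripts. Then Λ_I := G_I*/∼_I is a source-free k-graph. -/

import Mathlib

open scoped Classical

/-- A `k`-colored directed graph: vertices, edges, range, source, and a color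
(degree) in `Fin k` for each edge. -/
structure ColoredGraph (k : ℕ) where
  V : Type
  E : Type
  src : E → V
  rng : E → V
  color : E → Fin k

namespace ColoredGraph

variable {k : ℕ}

/-- A list of edges (listed from the source end) is composable starting at `v`. -/
def Composable (G : ColoredGraph k) : G.V → List G.E → Prop
  | _, [] => True
  | v, e :: l => G.src e = v ∧ Composable G (G.rng e) l

/-- The final vertex reached by following a list of edges starting at `v`. -/
def endV (G : ColoredGraph k) : G.V → List G.E → G.V
  | v, [] => v
  | _, e :: l => endV G (G.rng e) l

/-- A finite path in `G` : an element of the path category `G*`.  The edges are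
listed starting from the source (so the first edge of the list is the first,
innermost, edge of the path). -/
structure GPath (G : ColoredGraph k) where
  src : G.V
  edges : List G.E
  comp : G.Composable src edges

namespace GPath

variable {G : ColoredGraph k}

/-- The range of a path. -/
def rng (p : GPath G) : G.V := G.endV p.src p.edges

/-- The color order of a path: the list of colors of its edges, starting from
the source end. -/
def colors (p : GPath G) : List (Fin k) := p.edges.map G.color

/-- The degree of a path, as an element of `ℕ^k`. -/
def deg (p : GPath G) : Fin k → ℕ := fun i => p.colors.count i

end GPath

theorem composable_append {G : ColoredGraph k} :
    ∀ (l₁ : List G.E) (v : G.V) (l₂ : List G.E),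
      G.Composable v l₁ → G.Composable (G.endV v l₁) l₂ → G.Composable v (l₁ ++ l₂) := by
  intro l₁
  induction l₁ with
  | nil => intro v l₂ _ h₂; exact h₂
  | cons e l ih => intro v l₂ h₁ h₂; exact ⟨h₁.1, ih (G.rng e) l₂ h₁.2 h₂⟩

theorem endV_append {G : ColoredGraph k} :
    ∀ (l₁ : List G.E) (v : G.V) (l₂ : List G.E),
      G.endV v (l₁ ++ l₂) = G.endV (G.endV v l₁) l₂ := by
  intro l₁
  induction l₁ with
  | nil => intro v l₂; rfl
  | cons e l ih => intro v l₂; exact ih (G.rng e) l₂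

/-- Concatenation of composable paths. -/
def GPath.append {G : ColoredGraph k} (p q : GPath G) (h : p.rng = q.src) : GPath G :=
  ⟨p.src, p.edges ++ q.edges,
    composable_append p.edges p.src q.edges p.comp
      (by rw [show G.endV p.src p.edges = q.src from h]; exact q.comp)⟩

/-- The path consisting of a single edge. -/
def edgePath (G : ColoredGraph k) (e : G.E) : GPath G :=
  ⟨G.src e, [e], by exact ⟨rfl, True.intro⟩⟩

/-- The relation preserves range, source and degree. -/
def PreservesRSD (G : ColoredGraph k) (rel : GPath G → GPath G → Prop) : Prop :=
  ∀ p q : GPath G, rel p q → p.src = q.src ∧ p.rng = q.rng ∧ p.deg = q.deg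

/-- (KG0): the relation respects concatenation of paths. -/
def KG0 (G : ColoredGraph k) (rel : GPath G → GPath G → Prop) : Prop :=
  ∀ (p₁ p₂ q₁ q₂ : GPath G) (h : p₁.rng = p₂.src) (h' : q₁.rng = q₂.src),
    rel p₁ q₁ → rel p₂ q₂ → rel (p₁.append p₂ h) (q₁.append q₂ h')

/-- (KG4): for each path and each permutation of its color order there is a
unique equivalent path with the permuted color order. -/
def KG4 (G : ColoredGraph k) (rel : GPath G → GPath G → Prop) : Prop :=
  ∀ (p : GPath G) (c : List (Fin k)), List.Perm c p.colors →
    ∃! q : GPath G, rel q p ∧ q.colors = c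

/-- (KG1): distinct edges are inequivalent. -/
def KG1 (G : ColoredGraph k) (rel : GPath G → GPath G → Prop) : Prop :=
  ∀ e f : G.E, rel (edgePath G e) (edgePath G f) ↔ e = f

/-- (KG2): completeness for bi-colored paths. -/
def KG2 (G : ColoredGraph k) (rel : GPath G → GPath G → Prop) : Prop :=
  ∀ (p : GPath G) (i j : Fin k), p.colors = [i, j] →
    ∃! q : GPath G, rel p q ∧ q.colors = [j, i]

/-- An equivalence relation, together with `KG0` and `KG4`, presents a `k`-graph. -/
def IsKGraphRel (G : ColoredGraph k) (rel : GPath G → GPath G → Prop) : Prop :=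
  Equivalence rel ∧ PreservesRSD G rel ∧ KG0 G rel ∧ KG4 G rel

/-- Every vertex receives an edge of every color. -/
def SourceFree (G : ColoredGraph k) : Prop :=
  ∀ (v : G.V) (i : Fin k), ∃ e : G.E, G.rng e = v ∧ G.color e = i

/-- Every vertex receives finitely many edges of each color. -/
def RowFinite (G : ColoredGraph k) : Prop :=
  ∀ (v : G.V) (i : Fin k), Set.Finite {e : G.E | G.rng e = v ∧ G.color e = i}

/-- `q` is obtained from `p` by replacing the initial (inner) two-edge subpath by
an equivalent two-edge path with transposed colors. -/
def SwapInner (G : ColoredGraph k) (rel : GPath G → GPath G → Prop) (p q : GPath G) : Prop :=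
  ∃ (a b w : GPath G) (ha : a.rng = w.src) (hb : b.rng = w.src),
    a.edges.length = 2 ∧ b.colors = a.colors.reverse ∧ rel a b ∧
    p = a.append w ha ∧ q = b.append w hb

/-- `q` is obtained from `p` by replacing the final (outer) two-edge subpath by
an equivalent two-edge path with transposed colors. -/
def SwapOuter (G : ColoredGraph k) (rel : GPath G → GPath G → Prop) (p q : GPath G) : Prop :=
  ∃ (w a b : GPath G) (ha : w.rng = a.src) (hb : w.rng = b.src),
    a.edges.length = 2 ∧ b.colors = a.colors.reverse ∧ rel a b ∧
    p = w.append a ha ∧ q = w.append b hb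

/-- (KG3): associativity. For a tri-colored path with pairwise distinct colors,
the two standard routes of successive pairwise swaps give the same result. -/
def KG3 (G : ColoredGraph k) (rel : GPath G → GPath G → Prop) : Prop :=
  ∀ (p : GPath G) (i j l : Fin k), i ≠ j → j ≠ l → i ≠ l →
    p.colors = [l, j, i] → ∀ p₁ p₂ p₃ q₁ q₂ q₃ : GPath G,
      SwapOuter G rel p p₁ → SwapInner G rel p₁ p₂ → SwapOuter G rel p₂ p₃ →
      SwapInner G rel p q₁ → SwapOuter G rel q₁ q₂ → SwapInner G rel q₂ q₃ → p₃ = q₃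

/-- `w ≤ v` : there is a path from `v` to `w` (source `v`, range `w`). -/
def LeV (G : ColoredGraph k) (v w : G.V) : Prop :=
  ∃ p : GPath G, p.src = v ∧ p.rng = w

theorem LeV_extend {G : ColoredGraph k} {v : G.V} (e : G.E)
    (h : LeV G v (G.src e)) : LeV G v (G.rng e) := by
  obtain ⟨p, hs, hr⟩ := h
  refine ⟨p.append (edgePath G e) hr, hs, ?_⟩
  show G.endV p.src (p.edges ++ [e]) = G.rng e
  exact (endV_append p.edges p.src [e]).trans rfl

/-- A complete edge from `u` to `w`: exactly one edge of each color, all with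
source `u` and range `w`, closed under commuting squares. -/
def IsCompleteEdge (G : ColoredGraph k) (rel : GPath G → GPath G → Prop)
    (E : Set G.E) (u w : G.V) : Prop :=
  (∀ i : Fin k, ∃! e : G.E, e ∈ E ∧ G.color e = i) ∧
  (∀ e ∈ E, G.src e = u ∧ G.rng e = w) ∧
  (∀ e ∈ E, ∀ a b f' : G.E, ∀ p q : GPath G,
    ((p.edges = [a, e] ∧ q.edges = [b, f']) ∨ (p.edges = [e, a] ∧ q.edges = [f', b])) →
    rel p q → f' ∈ E)

/-- A set `T` of edges of the color of `f` is closed under being opposite to a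
member in a commuting square whose other color differs from that of `f`. -/
def SqClosed (G : ColoredGraph k) (rel : GPath G → GPath G → Prop)
    (f : G.E) (T : Set G.E) : Prop :=
  ∀ g ∈ T, ∀ (e a b : G.E) (p q : GPath G),
    G.color a = G.color b → G.color a ≠ G.color f → G.color e = G.color f →
    ((p.edges = [g, a] ∧ q.edges = [b, e]) ∨ (p.edges = [a, g] ∧ q.edges = [e, b])) →
    rel p q → e ∈ T

/-- Vertices of the in-split graph: the old vertices other than `v`, together
with the two copies `v¹, v²` of `v` (encoded by `Bool`). -/
abbrev IV (G : ColoredGraph k) (v : G.V) := {w : G.V // w ≠ v} ⊕ Bool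

/-- Edges of the in-split graph: each edge with source `≠ v` survives, and each
edge with source `v` is duplicated into two copies (indexed by `Bool`). -/
abbrev IE (G : ColoredGraph k) (v : G.V) :=
  {e : G.E // G.src e ≠ v} ⊕ ({e : G.E // G.src e = v} × Bool)

/-- The in-split colored graph at the vertex `v` for the part `E₁` of the
partition `E₁ ∪ E₂` of `r⁻¹(v)` (an edge with range `v` gets range `v¹` if it
lies in `E₁` and `v²` otherwise; here `v¹` is encoded as `true`). -/
noncomputable def InsplitGraph (G : ColoredGraph k) (v : G.V) (E₁ : Set G.E) :
    ColoredGraph k where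
  V := IV G v
  E := IE G v
  src := fun ε => match ε with
    | Sum.inl e => Sum.inl ⟨G.src e.1, e.2⟩
    | Sum.inr (_, b) => Sum.inr b
  rng := fun ε => match ε with
    | Sum.inl e =>
        if h : G.rng e.1 = v then (if e.1 ∈ E₁ then Sum.inr true else Sum.inr false)
        else Sum.inl ⟨G.rng e.1, h⟩
    | Sum.inr (e, _) =>
        if h : G.rng e.1 = v then (if e.1 ∈ E₁ then Sum.inr true else Sum.inr false)
        else Sum.inl ⟨G.rng e.1, h⟩
  color := fun ε => match ε with
    | Sum.inl e => G.color e.1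
    | Sum.inr (e, _) => G.color e.1

/-- The parent map on vertices of the in-split graph (removes superscripts). -/
def parV (G : ColoredGraph k) (v : G.V) : IV G v → G.V
  | Sum.inl w => w.1
  | Sum.inr _ => v

/-- The parent map on edges of the in-split graph (removes superscripts). -/
def parE (G : ColoredGraph k) (v : G.V) : IE G v → G.E
  | Sum.inl e => e.1
  | Sum.inr (e, _) => e.1

/-- The equivalence relation on paths of the in-split graph:
`p ∼_I q` iff `par p ∼ par q`, and `p`, `q` have the same source and range. -/
def InsplitRel (G : ColoredGraph k) (rel : GPath G → GPath G → Prop)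
    (v : G.V) (E₁ : Set G.E)
    (p q : GPath (InsplitGraph G v E₁)) : Prop :=
  p.src = q.src ∧ p.rng = q.rng ∧
  ∃ p' q' : GPath G,
    p'.src = parV G v p.src ∧ p'.edges = p.edges.map (parE G v) ∧
    q'.src = parV G v q.src ∧ q'.edges = q.edges.map (parE G v) ∧
    rel p' q'

/-! ### Auxiliary lemmas for the in-splitting theorem -/

section InsplitAux

variable {k : ℕ} {G : ColoredGraph k}

theorem GPath.ext' {p q : GPath G} (h1 : p.src = q.src) (h2 : p.edges = q.edges) :
    p = q := by
  cases p; cases q; cases h1; cases h2; rfl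

theorem colors_length (p : GPath G) : p.colors.length = p.edges.length :=
  List.length_map _

theorem rng_append' (p q : GPath G) (h : p.rng = q.src) :
    (p.append q h).rng = q.rng := by
  show G.endV p.src (p.edges ++ q.edges) = q.rng
  rw [endV_append, show G.endV p.src p.edges = q.src from h]; rfl

theorem colors_append' (p q : GPath G) (h : p.rng = q.src) :
    (p.append q h).colors = p.colors ++ q.colors := by
  simp [GPath.append, GPath.colors]

theorem endV_getLast : ∀ (l : List G.E) (w : G.V) (a : G.E),
    l.getLast? = some a → G.endV w l = G.rng a
  | [], _, _, h => by simp at h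
  | [e], w, a, h => by
      simp only [List.getLast?_singleton, Option.some.injEq] at h
      subst h; rfl
  | e :: e' :: l, w, a, h => by
      rw [List.getLast?_cons_cons] at h
      exact endV_getLast (e' :: l) (G.rng e) a h

theorem rng_getLast (p : GPath G) (a : G.E) (h : p.edges.getLast? = some a) :
    p.rng = G.rng a :=
  endV_getLast p.edges p.src a h

theorem exists_getLast {l : List G.E} (h : l ≠ []) : ∃ a, l.getLast? = some a := by
  cases hl : l.getLast? with
  | none => exact absurd (List.getLast?_eq_none_iff.mp hl) h
  | some a => exact ⟨a, rfl⟩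

theorem edges_pair {p : GPath G} {x y : Fin k} (h : p.colors = [x, y]) :
    ∃ b f, p.edges = [b, f] ∧ G.color b = x ∧ G.color f = y := by
  obtain ⟨s, l, c⟩ := p
  rcases l with _ | ⟨b, _ | ⟨f, _ | ⟨z, l⟩⟩⟩ <;>
    simp only [GPath.colors, List.map_nil, List.map_cons, List.cons.injEq,
      List.nil_eq, List.map_eq_nil_iff] at h
  · exact absurd h (by simp)
  · exact absurd h (by simp)
  · exact ⟨b, f, rfl, h.1, h.2.1⟩
  · exact absurd h (by simp)

variable {rel : GPath G → GPath G → Prop}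

theorem rel_colors_perm (hK : IsKGraphRel G rel) {p q : GPath G} (h : rel p q) :
    p.colors.Perm q.colors := by
  have hd := (hK.2.1 p q h).2.2
  refine List.perm_iff_count.2 fun i => ?_
  simpa [GPath.deg] using congrFun hd i

theorem rel_rigid (hK : IsKGraphRel G rel) {p q : GPath G} (h : rel p q)
    (hc : p.colors = q.colors) : p = q := by
  obtain ⟨r, _, hu⟩ := hK.2.2.2 q p.colors (by rw [hc])
  exact (hu p ⟨h, rfl⟩).trans (hu q ⟨hK.1.refl q, hc.symm⟩).symm

theorem exists_samePart {v : G.V} {E₁ E₂ : Set G.E} (hK : IsKGraphRel G rel)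
    (hpair : ∀ a fe : G.E, G.rng a = v → G.rng fe = v →
      (∃ (g b : G.E) (p q : GPath G), p.edges = [g, a] ∧ q.edges = [b, fe] ∧ rel p q) →
      ((a ∈ E₁ ↔ fe ∈ E₁) ∧ (a ∈ E₂ ↔ fe ∈ E₂))) :
    ∀ {c c' : List (Fin k)}, c.Perm c' → ∀ p : GPath G, p.colors = c' →
      ∃ q : GPath G, rel q p ∧ q.colors = c ∧
        ∀ a f : G.E, q.edges.getLast? = some a → p.edges.getLast? = some f →
          G.rng f = v → (a ∈ E₁ ↔ f ∈ E₁) := by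
  intro c c' hperm
  induction hperm with
  | nil =>
      intro p hp
      refine ⟨p, hK.1.refl p, hp, ?_⟩
      intro a f ha hf _
      injection ha.symm.trans hf with h
      rw [h]
  | cons x hperm ih =>
      rename_i t₁ t₂
      intro p hp
      obtain ⟨ps, pe, pc⟩ := p
      match pe, pc, hp with
      | [], _, hp => simp [GPath.colors] at hp
      | e :: rest, pc, hp =>
        simp only [GPath.colors, List.map_cons, List.cons.injEq] at hp
        obtain ⟨hx, hrest⟩ := hp
        obtain ⟨q₂, hrel₂, hcol₂, hsp₂⟩ := ih ⟨G.rng e, rest, pc.2⟩ hrest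
        have hsrc : q₂.src = G.rng e := (hK.2.1 q₂ _ hrel₂).1
        have hre : (edgePath G e).rng = q₂.src := hsrc.symm
        have hre' : (edgePath G e).rng = (⟨G.rng e, rest, pc.2⟩ : GPath G).src := rfl
        refine ⟨(edgePath G e).append q₂ hre, ?_, ?_, ?_⟩
        · have hpEq : (⟨ps, e :: rest, pc⟩ : GPath G) =
              (edgePath G e).append ⟨G.rng e, rest, pc.2⟩ hre' := GPath.ext' pc.1.symm rfl
          rw [hpEq]
          exact hK.2.2.1 (edgePath G e) q₂ (edgePath G e) ⟨G.rng e, rest, pc.2⟩ hre hre'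
            (hK.1.refl _) hrel₂
        · rw [colors_append' _ _ hre, hcol₂]
          simp [edgePath, GPath.colors, hx]
        · intro a f ha hf hv
          have ha' : (e :: q₂.edges).getLast? = some a := ha
          have hf' : (e :: rest).getLast? = some f := hf
          match rest, pc, hrest, hsp₂, hf' with
          | [], _, hrest, hsp₂, hf' =>
            have ht₂ : t₂ = [] := by simpa using hrest.symm
            have ht₁ : t₁ = [] := List.Perm.eq_nil (ht₂ ▸ hperm)
            have hq₂ : q₂.edges = [] := by
              have hlq := colors_length q₂
              rw [hcol₂, ht₁] at hlq
              exact List.length_eq_zero_iff.mp hlq.symm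
            rw [hq₂] at ha'
            simp only [List.getLast?_singleton, Option.some.injEq] at ha' hf'
            rw [← ha', ← hf']
          | r :: rest', _, hrest, hsp₂, hf' =>
            obtain ⟨s, q₂', hq₂'⟩ : ∃ s q₂', q₂.edges = s :: q₂' := by
              have hlq := colors_length q₂
              rw [hcol₂, hperm.length_eq, ← hrest] at hlq
              cases hq : q₂.edges with
              | nil => rw [hq] at hlq; simp at hlq
              | cons s q₂' => exact ⟨s, q₂', rfl⟩
            refine hsp₂ a f ?_ ?_ hv
            · rw [hq₂'] at ha' ⊢
              rw [List.getLast?_cons_cons] at ha'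
              exact ha'
            · rw [List.getLast?_cons_cons] at hf'
              exact hf'
  | swap x y l =>
      intro p hp
      obtain ⟨ps, pe, pc⟩ := p
      match pe, pc, hp with
      | [], _, hp => simp [GPath.colors] at hp
      | [_], _, hp => simp [GPath.colors] at hp
      | e₁ :: e₂ :: rest, pc, hp =>
        simp only [GPath.colors, List.map_cons, List.cons.injEq] at hp
        obtain ⟨hx, hy, hl⟩ := hp
        have htc : (⟨ps, [e₁, e₂], ⟨pc.1, pc.2.1, trivial⟩⟩ : GPath G).colors = [x, y] := by
          simp [GPath.colors, hx, hy]
        obtain ⟨t, ⟨hrelt, hcolt⟩, _⟩ :=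
          hK.2.2.2 ⟨ps, [e₁, e₂], ⟨pc.1, pc.2.1, trivial⟩⟩ [y, x]
            (by rw [htc]; exact List.Perm.swap x y [])
        obtain ⟨b, f', htedges, hcb, hcf⟩ := edges_pair hcolt
        have htr : t.rng = G.rng e₂ := (hK.2.1 t _ hrelt).2.1
        have hh : t.rng = (⟨G.rng e₂, rest, pc.2.2⟩ : GPath G).src := htr
        have hh' : (⟨ps, [e₁, e₂], ⟨pc.1, pc.2.1, trivial⟩⟩ : GPath G).rng =
            (⟨G.rng e₂, rest, pc.2.2⟩ : GPath G).src := rfl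
        refine ⟨t.append ⟨G.rng e₂, rest, pc.2.2⟩ hh, ?_, ?_, ?_⟩
        · have hpEq : (⟨ps, e₁ :: e₂ :: rest, pc⟩ : GPath G) =
              (⟨ps, [e₁, e₂], ⟨pc.1, pc.2.1, trivial⟩⟩ : GPath G).append
                ⟨G.rng e₂, rest, pc.2.2⟩ hh' := GPath.ext' rfl rfl
          rw [hpEq]
          exact hK.2.2.1 t _ _ _ hh hh' hrelt (hK.1.refl _)
        · rw [colors_append' _ _ hh, hcolt]
          simp [GPath.colors, hl]
        · intro a f ha hf hv
          have ha' : (t.edges ++ rest).getLast? = some a := ha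
          have hf' : (e₁ :: e₂ :: rest).getLast? = some f := hf
          rw [htedges] at ha'
          match rest, hf', ha' with
          | [], hf', ha' =>
            simp only [List.append_nil, List.getLast?_cons_cons,
              List.getLast?_singleton, Option.some.injEq] at ha' hf'
            have hrf' : G.rng f' = v := by
              rw [← rng_getLast t f' (by rw [htedges, List.getLast?_cons_cons,
                List.getLast?_singleton]), htr, hf']
              exact hv
            have hmain := (hpair f' e₂ hrf' (by rw [hf']; exact hv)
              ⟨b, e₁, t, ⟨ps, [e₁, e₂], ⟨pc.1, pc.2.1, trivial⟩⟩, htedges, rfl, hrelt⟩).1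
            rw [← ha', ← hf']
            exact hmain
          | r :: rest', hf', ha' =>
            rw [show [b, f'] ++ r :: rest' = b :: f' :: r :: rest' from rfl,
              List.getLast?_cons_cons, List.getLast?_cons_cons] at ha'
            rw [List.getLast?_cons_cons, List.getLast?_cons_cons] at hf'
            injection ha'.symm.trans hf' with hh2
            rw [hh2]
  | trans h₁ h₂ ih₁ ih₂ =>
      intro p hp
      obtain ⟨q₂, hr₂, hc₂, hsp₂⟩ := ih₂ p hp
      obtain ⟨q₁, hr₁, hc₁, hsp₁⟩ := ih₁ q₂ hc₂
      refine ⟨q₁, hK.1.trans hr₁ hr₂, hc₁, ?_⟩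
      intro a f ha hf hv
      have hpne : p.edges ≠ [] := by
        intro hnil; rw [hnil] at hf; simp at hf
      have hq₂ne : q₂.edges ≠ [] := by
        intro hnil
        have hl := colors_length q₂
        rw [hc₂, hnil] at hl
        have hl2 := colors_length p
        rw [hp, ← h₂.length_eq] at hl2
        rw [hl] at hl2
        exact hpne (List.length_eq_zero_iff.mp (by simpa using hl2.symm))
      obtain ⟨f₂, hf₂⟩ := exists_getLast hq₂ne
      have hv₂ : G.rng f₂ = v := by
        rw [← rng_getLast q₂ f₂ hf₂, (hK.2.1 q₂ p hr₂).2.1, rng_getLast p f hf, hv]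
      exact (hsp₁ a f₂ ha hf₂ hv₂).trans (hsp₂ f₂ f hf₂ hf hv)

theorem samePart {v : G.V} {E₁ E₂ : Set G.E} (hK : IsKGraphRel G rel)
    (hpair : ∀ a fe : G.E, G.rng a = v → G.rng fe = v →
      (∃ (g b : G.E) (p q : GPath G), p.edges = [g, a] ∧ q.edges = [b, fe] ∧ rel p q) →
      ((a ∈ E₁ ↔ fe ∈ E₁) ∧ (a ∈ E₂ ↔ fe ∈ E₂)))
    {p q : GPath G} (h : rel p q) {a f : G.E}
    (ha : p.edges.getLast? = some a) (hf : q.edges.getLast? = some f)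
    (hv : G.rng f = v) : a ∈ E₁ ↔ f ∈ E₁ := by
  obtain ⟨q₀, hrel₀, hcol₀, hsp₀⟩ :=
    exists_samePart (E₂ := E₂) hK hpair (rel_colors_perm hK h) q rfl
  obtain ⟨r, _, hu⟩ := hK.2.2.2 q p.colors (rel_colors_perm hK h)
  have hpq : p = q₀ := (hu p ⟨h, rfl⟩).trans (hu q₀ ⟨hrel₀, hcol₀⟩).symm
  exact hsp₀ a f (by rw [← hpq]; exact ha) hf hv

end InsplitAux

/-! ### The in-split graph: parent paths and lifts -/

section InsplitLift

variable {k : ℕ} (G : ColoredGraph k) (v : G.V) (E₁ : Set G.E)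

theorem src_parE (ε : IE G v) :
    G.src (parE G v ε) = parV G v ((InsplitGraph G v E₁).src ε) := by
  rcases ε with e | ⟨e, b⟩
  · rfl
  · exact e.2

/-- The target vertex in the in-split graph of (any lift of) an edge `e`. -/
noncomputable def nextV (e : G.E) : IV G v :=
  if h : G.rng e = v then (if e ∈ E₁ then Sum.inr true else Sum.inr false)
  else Sum.inl ⟨G.rng e, h⟩

theorem rng_insplit (ε : IE G v) :
    (InsplitGraph G v E₁).rng ε = nextV G v E₁ (parE G v ε) := by
  rcases ε with e | ⟨e, b⟩ <;> rfl

theorem parV_nextV (e : G.E) : parV G v (nextV G v E₁ e) = G.rng e := by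
  rw [nextV]
  split_ifs with h h1 <;> simp only [parV] <;> rw [h]

theorem rng_parE (ε : IE G v) :
    G.rng (parE G v ε) = parV G v ((InsplitGraph G v E₁).rng ε) := by
  rw [rng_insplit G v E₁, parV_nextV]

theorem color_parE (ε : IE G v) :
    G.color (parE G v ε) = (InsplitGraph G v E₁).color ε := by
  rcases ε with e | ⟨e, b⟩ <;> rfl

theorem par_composable : ∀ (l : List (IE G v)) (w : IV G v),
    (InsplitGraph G v E₁).Composable w l →
    G.Composable (parV G v w) (l.map (parE G v))
  | [], _, _ => trivial
  | ε :: l, w, h => by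
      refine ⟨?_, ?_⟩
      · rw [src_parE G v E₁ ε, h.1]
      · rw [rng_parE G v E₁ ε]
        exact par_composable l _ h.2

theorem par_endV : ∀ (l : List (IE G v)) (w : IV G v),
    parV G v ((InsplitGraph G v E₁).endV w l) =
      G.endV (parV G v w) (l.map (parE G v))
  | [], _ => rfl
  | ε :: l, w => by
      show parV G v ((InsplitGraph G v E₁).endV ((InsplitGraph G v E₁).rng ε) l) =
        G.endV (G.rng (parE G v ε)) (l.map (parE G v))
      rw [rng_parE G v E₁ ε]
      exact par_endV l _

/-- The parent path of a path in the in-split graph. -/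
noncomputable def parPath (P : GPath (InsplitGraph G v E₁)) : GPath G :=
  ⟨parV G v P.src, P.edges.map (parE G v), par_composable G v E₁ P.edges P.src P.comp⟩

theorem parPath_src (P : GPath (InsplitGraph G v E₁)) :
    (parPath G v E₁ P).src = parV G v P.src := rfl

theorem parPath_edges (P : GPath (InsplitGraph G v E₁)) :
    (parPath G v E₁ P).edges = P.edges.map (parE G v) := rfl

theorem parPath_rng (P : GPath (InsplitGraph G v E₁)) :
    (parPath G v E₁ P).rng = parV G v P.rng :=
  (par_endV G v E₁ P.edges P.src).symm

theorem parPath_colors (P : GPath (InsplitGraph G v E₁)) :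
    (parPath G v E₁ P).colors = P.colors := by
  show (P.edges.map (parE G v)).map G.color = P.edges.map (InsplitGraph G v E₁).color
  refine (List.map_map ..).trans ?_
  exact List.map_congr_left fun ε _ => color_parE G v E₁ ε

theorem insplitRel_iff {p q : GPath (InsplitGraph G v E₁)}
    {rel : GPath G → GPath G → Prop} :
    InsplitRel G rel v E₁ p q ↔
      p.src = q.src ∧ p.rng = q.rng ∧ rel (parPath G v E₁ p) (parPath G v E₁ q) := by
  constructor
  · rintro ⟨h1, h2, p', q', hp1, hp2, hq1, hq2, hr⟩
    refine ⟨h1, h2, ?_⟩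
    have he1 : p' = parPath G v E₁ p := GPath.ext' hp1 hp2
    have he2 : q' = parPath G v E₁ q := GPath.ext' hq1 hq2
    rw [← he1, ← he2]; exact hr
  · rintro ⟨h1, h2, hr⟩
    exact ⟨h1, h2, parPath G v E₁ p, parPath G v E₁ q, rfl, rfl, rfl, rfl, hr⟩

/-- Lift of an edge of `G` to the in-split graph, starting at a given lift of
its source. -/
noncomputable def liftE (w : IV G v) (e : G.E) (h : G.src e = parV G v w) : IE G v :=
  match w, h with
  | Sum.inl w', h => Sum.inl ⟨e, fun hv => w'.2 (h.symm.trans hv)⟩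
  | Sum.inr b, h => Sum.inr (⟨e, h⟩, b)

theorem parE_liftE (w : IV G v) (e : G.E) (h : G.src e = parV G v w) :
    parE G v (liftE G v w e h) = e := by
  cases w <;> rfl

theorem src_liftE (w : IV G v) (e : G.E) (h : G.src e = parV G v w) :
    (InsplitGraph G v E₁).src (liftE G v w e h) = w := by
  cases w with
  | inl w' => exact congrArg Sum.inl (Subtype.ext h)
  | inr b => rfl

theorem rng_liftE (w : IV G v) (e : G.E) (h : G.src e = parV G v w) :
    (InsplitGraph G v E₁).rng (liftE G v w e h) = nextV G v E₁ e := by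
  cases w <;> rfl

theorem color_liftE (w : IV G v) (e : G.E) (h : G.src e = parV G v w) :
    (InsplitGraph G v E₁).color (liftE G v w e h) = G.color e := by
  cases w <;> rfl

/-- Lift of a composable list of edges of `G` to the in-split graph. -/
noncomputable def liftL : (l : List G.E) → (w : IV G v) →
    G.Composable (parV G v w) l → List (IE G v)
  | [], _, _ => []
  | e :: l, w, h =>
      liftE G v w e h.1 ::
        liftL l (nextV G v E₁ e) (by rw [parV_nextV]; exact h.2)

theorem liftL_congr : ∀ {l l' : List G.E} {w w' : IV G v}
    (_ : l = l') (_ : w = w') (h : G.Composable (parV G v w) l)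
    (h' : G.Composable (parV G v w') l'),
    liftL G v E₁ l w h = liftL G v E₁ l' w' h' := by
  intro l l' w w' hl hw h h'
  subst hl; subst hw; rfl

theorem map_parE_liftL : ∀ (l : List G.E) (w : IV G v)
    (h : G.Composable (parV G v w) l),
    (liftL G v E₁ l w h).map (parE G v) = l
  | [], _, _ => rfl
  | e :: l, w, h => by
      show parE G v (liftE G v w e h.1) :: (liftL G v E₁ l _ _).map (parE G v) = e :: l
      rw [parE_liftE, map_parE_liftL]

theorem comp_liftL : ∀ (l : List G.E) (w : IV G v)
    (h : G.Composable (parV G v w) l),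
    (InsplitGraph G v E₁).Composable w (liftL G v E₁ l w h)
  | [], _, _ => trivial
  | e :: l, w, h => by
      refine ⟨src_liftE G v E₁ w e h.1, ?_⟩
      rw [rng_liftE]
      exact comp_liftL l _ _

/-- The end vertex in the in-split graph determined by a list of parent edges. -/
noncomputable def lastV : (w : IV G v) → List G.E → IV G v
  | w, [] => w
  | _, e :: l => lastV (nextV G v E₁ e) l

theorem lastV_getLast : ∀ (l : List G.E) (w : IV G v) (a : G.E),
    l.getLast? = some a → lastV G v E₁ w l = nextV G v E₁ a
  | [], _, _, h => by simp at h
  | [e], w, a, h => by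
      simp only [List.getLast?_singleton, Option.some.injEq] at h
      subst h; rfl
  | e :: e' :: l, w, a, h => by
      rw [List.getLast?_cons_cons] at h
      exact lastV_getLast (e' :: l) (nextV G v E₁ e) a h

theorem endV_liftL : ∀ (l : List G.E) (w : IV G v)
    (h : G.Composable (parV G v w) l),
    (InsplitGraph G v E₁).endV w (liftL G v E₁ l w h) = lastV G v E₁ w l
  | [], _, _ => rfl
  | e :: l, w, h => by
      show (InsplitGraph G v E₁).endV
        ((InsplitGraph G v E₁).rng (liftE G v w e h.1)) (liftL G v E₁ l _ _) =
          lastV G v E₁ (nextV G v E₁ e) l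
      rw [rng_liftE]
      exact endV_liftL l _ _

theorem endV_eq_lastV : ∀ (m : List (IE G v)) (w : IV G v),
    (InsplitGraph G v E₁).endV w m = lastV G v E₁ w (m.map (parE G v))
  | [], _ => rfl
  | ε :: m, w => by
      show (InsplitGraph G v E₁).endV ((InsplitGraph G v E₁).rng ε) m =
        lastV G v E₁ (nextV G v E₁ (parE G v ε)) (m.map (parE G v))
      rw [← rng_insplit]
      exact endV_eq_lastV m _

theorem liftE_parE (ε : IE G v) (w : IV G v)
    (hw : (InsplitGraph G v E₁).src ε = w) (h : G.src (parE G v ε) = parV G v w) :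
    liftE G v w (parE G v ε) h = ε := by
  rcases ε with e | ⟨e, b⟩
  · obtain ⟨e, he⟩ := e
    subst hw
    exact congrArg Sum.inl (Subtype.ext rfl)
  · obtain ⟨e, he⟩ := e
    subst hw
    exact congrArg (fun x => Sum.inr (x, b)) (Subtype.ext rfl)

theorem liftL_parE : ∀ (m : List (IE G v)) (w : IV G v)
    (hm : (InsplitGraph G v E₁).Composable w m)
    (h : G.Composable (parV G v w) (m.map (parE G v))),
    liftL G v E₁ (m.map (parE G v)) w h = m
  | [], _, _, _ => rfl
  | ε :: m, w, hm, h => by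
      show liftE G v w (parE G v ε) h.1 ::
        liftL G v E₁ (m.map (parE G v)) (nextV G v E₁ (parE G v ε)) _ = ε :: m
      rw [liftE_parE G v E₁ ε w hm.1]
      congr 1
      exact (liftL_congr G v E₁ rfl (rng_insplit G v E₁ ε).symm _
          (par_composable G v E₁ m _ hm.2)).trans (liftL_parE m _ hm.2 _)

end InsplitLift
/-- In-splitting a source-free `k`-graph at `v` along a partition `E₁ ∪ E₂` of
`r⁻¹(v)` satisfying the pairing condition yields a source-free `k`-graph. -/
theorem insplit_is_kgraph {k : ℕ} (G : ColoredGraph k) (rel : GPath G → GPath G → Prop)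
    (hK : IsKGraphRel G rel) (hsf : SourceFree G)
    (v : G.V) (E₁ E₂ : Set G.E)
    (hsub₁ : ∀ e ∈ E₁, G.rng e = v) (hsub₂ : ∀ e ∈ E₂, G.rng e = v)
    (hcov : ∀ e : G.E, G.rng e = v → e ∈ E₁ ∪ E₂)
    (hdisj : ∀ e : G.E, ¬(e ∈ E₁ ∧ e ∈ E₂))
    (hne₁ : E₁.Nonempty) (hne₂ : E₂.Nonempty)
    (hpair : ∀ a fe : G.E, G.rng a = v → G.rng fe = v →
      (∃ (g b : G.E) (p q : GPath G), p.edges = [g, a] ∧ q.edges = [b, fe] ∧ rel p q) →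
      ((a ∈ E₁ ↔ fe ∈ E₁) ∧ (a ∈ E₂ ↔ fe ∈ E₂))) :
    IsKGraphRel (InsplitGraph G v E₁) (InsplitRel G rel v E₁) ∧
      SourceFree (InsplitGraph G v E₁) := by
  -- every color appears in each part of the partition
  have hpart : ∀ (Ep : Set G.E), (∀ e ∈ Ep, G.rng e = v) →
      (∀ a fe : G.E, G.rng a = v → G.rng fe = v →
        (∃ (g b : G.E) (p q : GPath G), p.edges = [g, a] ∧ q.edges = [b, fe] ∧ rel p q) →
        (a ∈ Ep ↔ fe ∈ Ep)) →
      Ep.Nonempty → ∀ i : Fin k, ∃ f, f ∈ Ep ∧ G.color f = i ∧ G.rng f = v := by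
    rintro Ep hsub hp ⟨a, ha⟩ i
    by_cases hi : G.color a = i
    · exact ⟨a, ha, hi, hsub a ha⟩
    · obtain ⟨g, hg, hgc⟩ := hsf (G.src a) i
      have pcomp : G.Composable (G.src g) [g, a] := ⟨rfl, hg.symm, trivial⟩
      have hpc : (⟨G.src g, [g, a], pcomp⟩ : GPath G).colors = [i, G.color a] := by
        simp [GPath.colors, hgc]
      obtain ⟨q, ⟨hrelq, hcolq⟩, _⟩ := hK.2.2.2 ⟨G.src g, [g, a], pcomp⟩ [G.color a, i]
        (by rw [hpc]; exact List.Perm.swap i (G.color a) [])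
      obtain ⟨b, f, hqe, hcb, hcf⟩ := edges_pair hcolq
      have hqr : q.rng = G.rng a := by
        rw [(hK.2.1 q _ hrelq).2.1]; rfl
      have hrf : G.rng f = v := by
        rw [← rng_getLast q f (by rw [hqe, List.getLast?_cons_cons, List.getLast?_singleton]),
          hqr]
        exact hsub a ha
      exact ⟨f, (hp a f (hsub a ha) hrf
        ⟨g, b, ⟨G.src g, [g, a], pcomp⟩, q, rfl, hqe, hK.1.symm hrelq⟩).mp ha, hcf, hrf⟩
  have hcol₁ : ∀ i : Fin k, ∃ f, f ∈ E₁ ∧ G.color f = i ∧ G.rng f = v :=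
    hpart E₁ hsub₁ (fun a fe h1 h2 h3 => (hpair a fe h1 h2 h3).1) hne₁
  have hcol₂ : ∀ i : Fin k, ∃ f, f ∈ E₂ ∧ G.color f = i ∧ G.rng f = v :=
    hpart E₂ hsub₂ (fun a fe h1 h2 h3 => (hpair a fe h1 h2 h3).2) hne₂
  -- source-freeness of the in-split graph
  have hlift : ∀ e : G.E, ∃ ε : IE G v, parE G v ε = e := by
    intro e
    by_cases hs : G.src e = v
    · exact ⟨Sum.inr (⟨e, hs⟩, true), rfl⟩
    · exact ⟨Sum.inl ⟨e, hs⟩, rfl⟩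
  have hsf' : SourceFree (InsplitGraph G v E₁) := by
    intro w i
    cases w with
    | inl u =>
        obtain ⟨e, he, hec⟩ := hsf u.1 i
        obtain ⟨ε, hε⟩ := hlift e
        refine ⟨ε, ?_, by rw [← color_parE G v E₁ ε, hε, hec]⟩
        rw [rng_insplit G v E₁ ε, hε]
        unfold nextV
        rw [dif_neg (by rw [he]; exact u.2)]
        exact congrArg Sum.inl (Subtype.ext he)
    | inr b =>
        cases b with
        | true =>
            obtain ⟨f, hf, hfc, hfr⟩ := hcol₁ i
            obtain ⟨ε, hε⟩ := hlift f
            refine ⟨ε, ?_, by rw [← color_parE G v E₁ ε, hε, hfc]⟩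
            rw [rng_insplit G v E₁ ε, hε]
            unfold nextV
            rw [dif_pos hfr, if_pos hf]
        | false =>
            obtain ⟨f, hf, hfc, hfr⟩ := hcol₂ i
            obtain ⟨ε, hε⟩ := hlift f
            refine ⟨ε, ?_, by rw [← color_parE G v E₁ ε, hε, hfc]⟩
            rw [rng_insplit G v E₁ ε, hε]
            unfold nextV
            rw [dif_pos hfr, if_neg (fun h1 => hdisj f ⟨h1, hf⟩)]
  -- equivalence
  have hequiv : Equivalence (InsplitRel G rel v E₁) := by
    refine ⟨fun p => (insplitRel_iff G v E₁).2 ⟨rfl, rfl, hK.1.refl _⟩, ?_, ?_⟩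
    · intro p q h
      rw [insplitRel_iff] at h ⊢
      exact ⟨h.1.symm, h.2.1.symm, hK.1.symm h.2.2⟩
    · intro p q r h1 h2
      rw [insplitRel_iff] at h1 h2 ⊢
      exact ⟨h1.1.trans h2.1, h1.2.1.trans h2.2.1, hK.1.trans h1.2.2 h2.2.2⟩
  -- preservation of range, source, degree
  have hRSD : PreservesRSD (InsplitGraph G v E₁) (InsplitRel G rel v E₁) := by
    intro p q h
    rw [insplitRel_iff] at h
    refine ⟨h.1, h.2.1, ?_⟩
    have hd := (hK.2.1 _ _ h.2.2).2.2
    funext i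
    have h1 := congrFun hd i
    simp only [GPath.deg, parPath_colors] at h1
    exact h1
  -- (KG0)
  have hKG0 : KG0 (InsplitGraph G v E₁) (InsplitRel G rel v E₁) := by
    intro p₁ p₂ q₁ q₂ h h' r1 r2
    rw [insplitRel_iff] at r1 r2 ⊢
    have hpp : ∀ (a b : GPath (InsplitGraph G v E₁)) (hab : a.rng = b.src),
        parPath G v E₁ (a.append b hab) =
          (parPath G v E₁ a).append (parPath G v E₁ b)
            (by rw [parPath_rng, parPath_src, hab]) := by
      intro a b hab
      exact GPath.ext' rfl (by simp [parPath_edges, GPath.append]; exact List.map_append ..)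
    refine ⟨r1.1, ?_, ?_⟩
    · rw [rng_append', rng_append']
      exact r2.2.1
    · rw [hpp p₁ p₂ h, hpp q₁ q₂ h']
      exact hK.2.2.1 _ _ _ _ _ _ r1.2.2 r2.2.2
  -- (KG4)
  have hKG4 : KG4 (InsplitGraph G v E₁) (InsplitRel G rel v E₁) := by
    intro p c hc
    have hc' : c.Perm (parPath G v E₁ p).colors := by
      rw [parPath_colors]; exact hc
    obtain ⟨q', ⟨hq'rel, hq'col⟩, huniq⟩ := hK.2.2.2 (parPath G v E₁ p) c hc'
    have hsrc' : q'.src = parV G v p.src := (hK.2.1 q' _ hq'rel).1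
    have hcomp : G.Composable (parV G v p.src) q'.edges := hsrc' ▸ q'.comp
    refine ⟨⟨p.src, liftL G v E₁ q'.edges p.src hcomp,
      comp_liftL G v E₁ q'.edges p.src hcomp⟩, ⟨?_, ?_⟩, ?_⟩
    · -- InsplitRel Q p
      rw [insplitRel_iff]
      have hQpar : parPath G v E₁ ⟨p.src, liftL G v E₁ q'.edges p.src hcomp,
          comp_liftL G v E₁ q'.edges p.src hcomp⟩ = q' :=
        GPath.ext' hsrc'.symm (map_parE_liftL G v E₁ q'.edges p.src hcomp)
      refine ⟨rfl, ?_, by rw [hQpar]; exact hq'rel⟩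
      -- range equality
      show (InsplitGraph G v E₁).endV p.src (liftL G v E₁ q'.edges p.src hcomp) = p.rng
      rw [endV_liftL G v E₁ q'.edges p.src hcomp,
        show p.rng = lastV G v E₁ p.src (p.edges.map (parE G v)) from
          endV_eq_lastV G v E₁ p.edges p.src]
      have hlen := (rel_colors_perm hK hq'rel).length_eq
      rw [colors_length, colors_length, parPath_edges] at hlen
      rcases hql : q'.edges.getLast? with _ | a
      · have hq0 : q'.edges = [] := List.getLast?_eq_none_iff.mp hql
        have hp0 : p.edges.map (parE G v) = [] := by
          rw [hq0] at hlen
          exact List.length_eq_zero_iff.mp hlen.symm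
        rw [hq0, hp0]
      · have hne : p.edges.map (parE G v) ≠ [] := by
          intro h0
          rw [h0] at hlen
          rw [List.length_eq_zero_iff.mp hlen] at hql
          simp at hql
        obtain ⟨f, hf⟩ := exists_getLast hne
        refine (lastV_getLast G v E₁ _ _ a hql).trans (Eq.trans ?_ (lastV_getLast G v E₁ _ _ f hf).symm)
        have hra : G.rng a = G.rng f := by
          have e1 : q'.rng = G.rng a := rng_getLast q' a hql
          have e2 : (parPath G v E₁ p).rng = G.rng f := rng_getLast _ f hf
          rw [← e1, ← e2, (hK.2.1 q' _ hq'rel).2.1]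
        unfold nextV
        by_cases hrv : G.rng a = v
        · rw [dif_pos hrv, dif_pos (hra ▸ hrv)]
          have hiff : a ∈ E₁ ↔ f ∈ E₁ :=
            samePart (E₂ := E₂) hK hpair hq'rel hql hf (hra ▸ hrv)
          by_cases ha1 : a ∈ E₁
          · rw [if_pos ha1, if_pos (hiff.mp ha1)]
          · rw [if_neg ha1, if_neg (fun hh => ha1 (hiff.mpr hh))]
        · rw [dif_neg hrv, dif_neg (hra ▸ hrv)]
          exact congrArg Sum.inl (Subtype.ext hra)
    · -- colors
      have hQpar : parPath G v E₁ ⟨p.src, liftL G v E₁ q'.edges p.src hcomp,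
          comp_liftL G v E₁ q'.edges p.src hcomp⟩ = q' :=
        GPath.ext' hsrc'.symm (map_parE_liftL G v E₁ q'.edges p.src hcomp)
      rw [← parPath_colors G v E₁ _, hQpar, hq'col]
    · rintro R ⟨hRrel, hRcol⟩
      rw [insplitRel_iff] at hRrel
      have hRpar : parPath G v E₁ R = q' :=
        huniq _ ⟨hRrel.2.2, by rw [parPath_colors]; exact hRcol⟩
      refine GPath.ext' hRrel.1 ?_
      have h1 := (liftL_parE G v E₁ R.edges R.src R.comp
        (par_composable G v E₁ R.edges R.src R.comp)).symm
      rw [h1]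
      exact liftL_congr G v E₁
        (by rw [← parPath_edges G v E₁ R, hRpar]) hRrel.1 _ _
  exact ⟨⟨hequiv, hRSD, hKG0, hKG4⟩, hsf'⟩

end ColoredGraph
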